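/- arXiv:math/0311015 — 3 statements merged into one kernel-verified Lean document; each statement's English description precedes it below -/
import Mathlib

section
/- The class of Valdivia compact spaces is preserved by arbitrary products: if (K_i)_{i ∈ I} is a family of Valdivia compact spaces indexed by a set I, then the Tychonoff product ∏_{i ∈ I} K_i is Valdivia compact. -/
open unitInterval

universe u

/-- The Σ-product of copies of `[0,1]` indexed by `A`, with base point `0`:
the set of points of the cube `[0,1]^A` with countably many nonzero coordinates. -/
def SigmaProd (A : Type u) : Set (A → I) :=
  {x | {a : A | x a ≠ 0}.Countable}

/-- A space `K` is Valdivia compact if it is compact Hausdorff and embeds into some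
Tikhonov cube `[0,1]^A` so that the image meets the Σ-product in a dense subset of the image. -/
def IsValdivia (K : Type u) [TopologicalSpace K] : Prop :=
  CompactSpace K ∧ T2Space K ∧
    ∃ (A : Type u) (e : K → (A → I)),
      Topology.IsEmbedding e ∧
      Set.range e ⊆ closure (Set.range e ∩ SigmaProd A)

section Aux

open Topology Set

/-- `Pi.map` of a family of inducing maps is inducing. -/
lemma isInducing_piMap' {ι : Type*} {π Y : ι → Type*} [∀ i, TopologicalSpace (π i)]
    [∀ i, TopologicalSpace (Y i)] {f : ∀ i, π i → Y i} (hf : ∀ i, IsInducing (f i)) :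
    IsInducing (Pi.map f) := by
  constructor
  simp only [Pi.topologicalSpace, induced_iInf, induced_compose]
  exact iInf_congr fun i => by
    rw [(hf i).eq_induced, induced_compose]
    rfl

/-- The uncurrying homeomorphism between `∀ i, κ i → I` and `(Σ i, κ i) → I`. -/
def uncurryHomeo {ι : Type*} (κ : ι → Type*) : (∀ i, κ i → I) ≃ₜ ((Σ i, κ i) → I) where
  toEquiv := (Equiv.piCurry fun _ _ => I).symm
  continuous_toFun := continuous_pi fun q => (continuous_apply q.2).comp (continuous_apply q.1)
  continuous_invFun := continuous_pi fun i => continuous_pi fun b => continuous_apply (⟨i, b⟩ : Σ i, κ i)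

end Aux

/-- Valdivia compact spaces are preserved by arbitrary Tychonoff products. -/
theorem isValdivia_pi {ι : Type u} (K : ι → Type u) [∀ i, TopologicalSpace (K i)]
    (h : ∀ i, IsValdivia (K i)) : IsValdivia (∀ i, K i) := by
  classical
  haveI : ∀ i, CompactSpace (K i) := fun i => (h i).1
  haveI : ∀ i, T2Space (K i) := fun i => (h i).2.1
  refine ⟨inferInstance, inferInstance, ?_⟩
  choose A g hemb hsub using fun i => (h i).2.2
  -- the preimages of the Σ-products are dense
  have hD : ∀ i, Dense {k : K i | g i k ∈ SigmaProd (A i)} := by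
    intro i
    rw [(hemb i).isInducing.dense_iff]
    intro k
    have : g i '' {k : K i | g i k ∈ SigmaProd (A i)} = Set.range (g i) ∩ SigmaProd (A i) := by
      rw [show {k : K i | g i k ∈ SigmaProd (A i)} = g i ⁻¹' SigmaProd (A i) from rfl,
        Set.image_preimage_eq_inter_range, Set.inter_comm]
    rw [this]
    exact hsub i ⟨k, rfl⟩
  by_cases hne : ∀ i, Nonempty (K i)
  · -- main case: all factors are nonempty
    have hDne : ∀ i, ∃ d, g i d ∈ SigmaProd (A i) := fun i => (hD i).nonempty
    choose d hd using hDne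
    set c : ∀ i, A i → I := fun i => g i (d i) with hc
    -- shifted embeddings sending `d i` to `0`
    set f : ∀ i, K i → (A i × Bool → I) := fun i k p =>
      Set.projIcc (0:ℝ) 1 zero_le_one
        (if p.2 then (g i k p.1 : ℝ) - c i p.1 else (c i p.1 : ℝ) - g i k p.1) with hfdef
    -- retraction recovering `g` from `f`
    set r : ∀ i, (A i × Bool → I) → A i → I := fun i u a =>
      Set.projIcc (0:ℝ) 1 zero_le_one ((u (a, true) : ℝ) - u (a, false) + c i a) with hrdef
    have hrf : ∀ i k, r i (f i k) = g i k := by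
      intro i k
      funext a
      have h1 : ((g i k a : ℝ)) ∈ Set.Icc (0:ℝ) 1 := (g i k a).2
      have h2 : ((c i a : ℝ)) ∈ Set.Icc (0:ℝ) 1 := (c i a).2
      have e1 : ((f i k (a, true)) : ℝ) = max 0 ((g i k a : ℝ) - c i a) := by
        simp only [hfdef, Set.coe_projIcc, if_pos]
        rw [min_eq_right (by linarith [h1.2, h2.1])]
      have e2 : ((f i k (a, false)) : ℝ) = max 0 ((c i a : ℝ) - g i k a) := by
        simp only [hfdef, Set.coe_projIcc, if_neg Bool.false_ne_true]
        rw [min_eq_right (by linarith [h2.2, h1.1])]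
      have key : ((f i k (a, true)) : ℝ) - f i k (a, false) + c i a = (g i k a : ℝ) := by
        rw [e1, e2]
        rcases le_total ((c i a : ℝ)) (g i k a) with hle | hle
        · rw [max_eq_right (by linarith), max_eq_left (by linarith)]; ring
        · rw [max_eq_left (by linarith), max_eq_right (by linarith)]; ring
      show Set.projIcc (0:ℝ) 1 zero_le_one _ = g i k a
      rw [key]
      exact Set.projIcc_val zero_le_one (g i k a)
    have hfc : ∀ i, Continuous (f i) := by
      intro i
      refine continuous_pi fun p => continuous_projIcc.comp ?_
      obtain ⟨a, b⟩ := p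
      cases b
      · simpa [Function.comp_def, Pi.sub_def] using (continuous_const.sub
          (continuous_subtype_val.comp ((continuous_apply a).comp (hemb i).continuous)))
      · simpa [Function.comp_def, Pi.sub_def] using ((continuous_subtype_val.comp
          ((continuous_apply a).comp (hemb i).continuous)).sub continuous_const)
    have hrc : ∀ i, Continuous (r i) := by
      intro i
      refine continuous_pi fun a => continuous_projIcc.comp ?_
      exact ((continuous_subtype_val.comp (continuous_apply (a, true))).sub
        (continuous_subtype_val.comp (continuous_apply (a, false)))).add continuous_const
    have hfemb : ∀ i, Topology.IsEmbedding (f i) := by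
      intro i
      refine Topology.IsEmbedding.of_comp (hfc i) (hrc i) ?_
      rw [show r i ∘ f i = g i from funext (hrf i)]
      exact hemb i
    have hfd : ∀ i, f i (d i) = 0 := by
      intro i
      funext p
      have : (if p.2 then (g i (d i) p.1 : ℝ) - c i p.1 else (c i p.1 : ℝ) - g i (d i) p.1) = 0 := by
        cases hp : p.2 <;> simp [hc]
      show Set.projIcc (0:ℝ) 1 zero_le_one _ = 0
      rw [this]
      exact Subtype.ext (by simp [Set.coe_projIcc])
    have hfS : ∀ i k, g i k ∈ SigmaProd (A i) → f i k ∈ SigmaProd (A i × Bool) := by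
      intro i k hk
      have hsubset : {p : A i × Bool | f i k p ≠ 0} ⊆
          ({a | g i k a ≠ 0} ∪ {a | c i a ≠ 0}) ×ˢ (Set.univ : Set Bool) := by
        rintro ⟨a, b⟩ hp
        by_contra hcon
        apply hp
        have ha : g i k a = 0 ∧ c i a = 0 := by
          simp only [Set.mem_prod, Set.mem_univ, and_true, Set.mem_union, Set.mem_setOf_eq,
            not_or, not_not] at hcon
          exact hcon
        have : (if (a, b).2 then (g i k (a, b).1 : ℝ) - c i (a, b).1
            else (c i (a, b).1 : ℝ) - g i k (a, b).1) = 0 := by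
          cases b <;> simp [ha.1, ha.2]
        show Set.projIcc (0:ℝ) 1 zero_le_one _ = 0
        rw [this]
        exact Subtype.ext (by simp [Set.coe_projIcc])
      exact Set.Countable.mono hsubset ((hk.union (hd i)).prod Set.countable_univ)
    -- the global embedding
    set e : (∀ i, K i) → (Σ i, A i × Bool) → I := fun x q => f q.1 (x q.1) q.2 with he
    refine ⟨Σ i, A i × Bool, e, ?_, ?_⟩
    · have heq : e = (uncurryHomeo (fun i => A i × Bool)) ∘ Pi.map f := rfl
      rw [heq]
      exact (uncurryHomeo _).isEmbedding.comp
        ⟨isInducing_piMap' fun i => (hfemb i).isInducing,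
          Function.Injective.piMap fun i => (hfemb i).injective⟩
    · rintro x ⟨y, rfl⟩
      set T : Set (∀ i, K i) :=
        {z | {i | z i ≠ d i}.Finite ∧ ∀ i, g i (z i) ∈ SigmaProd (A i)} with hT
      have hTd : Dense T := by
        intro x
        rw [mem_closure_iff]
        intro o ho hxo
        obtain ⟨F, u, hu, hsub'⟩ := isOpen_pi_iff.1 ho x hxo
        have hex : ∀ i ∈ F, ∃ w, g i w ∈ SigmaProd (A i) ∧ w ∈ u i := by
          intro i hi
          obtain ⟨w, hw1, hw2⟩ := (hD i).exists_mem_open (hu i hi).1 ⟨x i, (hu i hi).2⟩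
          exact ⟨w, hw1, hw2⟩
        choose w hw1 hw2 using hex
        set z : ∀ i, K i := fun i => if hi : i ∈ F then w i hi else d i with hz
        refine ⟨z, hsub' fun i hi => ?_, ?_, fun i => ?_⟩
        · have hi' : i ∈ F := hi
          simp only [hz, dif_pos hi']
          exact hw2 i hi'
        · refine (F.finite_toSet.subset fun i hi => ?_)
          by_contra hiF
          have hiF' : i ∉ F := fun hmem => hiF (Finset.mem_coe.2 hmem)
          exact hi (by simp only [hz]; rw [dif_neg hiF'])
        · by_cases hi : i ∈ F
          · simpa only [hz, dif_pos hi] using hw1 i hi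
          · simpa only [hz, dif_neg hi] using hd i
      have h1 : e y ∈ closure (e '' T) := by
        have hcont : Continuous e := by
          have heq : e = (uncurryHomeo (fun i => A i × Bool)) ∘ Pi.map f := rfl
          rw [heq]
          exact (uncurryHomeo _).continuous.comp (Continuous.piMap hfc)
        exact image_closure_subset_closure_image hcont ⟨y, hTd y, rfl⟩
      refine closure_mono ?_ h1
      rintro _ ⟨z, hz, rfl⟩
      refine ⟨⟨z, rfl⟩, ?_⟩
      show {q : Σ i, A i × Bool | e z q ≠ 0}.Countable
      have hsubset : {q : Σ i, A i × Bool | e z q ≠ 0} ⊆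
          ⋃ i ∈ {i | z i ≠ d i}, Sigma.mk i '' {p | f i (z i) p ≠ 0} := by
        rintro ⟨i, p⟩ hq
        have hq' : f i (z i) p ≠ 0 := hq
        have hzi : z i ≠ d i := by
          intro hzd
          apply hq'
          rw [hzd, hfd i]
          rfl
        exact Set.mem_biUnion hzi ⟨p, hq', rfl⟩
      exact Set.Countable.mono hsubset
        (Set.Countable.biUnion hz.1.countable fun i _ => (hfS i (z i) (hz.2 i)).image _)
  · -- degenerate case: some factor is empty, so the product is empty
    push_neg at hne
    obtain ⟨i0, hi0⟩ := hne
    haveI : IsEmpty (K i0) := hi0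
    haveI : IsEmpty (∀ i, K i) := isEmpty_pi.2 ⟨i0, inferInstance⟩
    refine ⟨PUnit.{u+1}, fun _ _ => 0,
      ⟨Topology.IsInducing.of_subsingleton _, fun x => (IsEmpty.false x).elim⟩, ?_⟩
    rw [Set.range_eq_empty]
    exact Set.empty_subset _
end

section
/- There exists an indecomposable torsion-free abelian group of cardinality ℵ₁: an abelian group A such that A is torsion-free, the cardinality of A is ℵ₁, and whenever A is the internal direct sum of two subgroups B and C (i.e., B ⊓ C = ⊥ and B ⊔ C = A), either B is the trivial subgroup or C is the trivial subgroup. -/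
open Cardinal Filter Set Function Topology

theorem continuum_le_padic : 𝔠 ≤ #ℤ_[2] := by
  suffices ∃ f : (ℕ → Bool) → ℤ_[2], range f ⊆ univ ∧ Continuous f ∧ Injective f by
    rcases this with ⟨f, -, -, f_inj⟩
    simpa using lift_mk_le_lift_mk_of_injective f_inj
  apply Perfect.exists_nat_bool_injection _ univ_nonempty
  refine ⟨isClosed_univ, preperfect_iff_nhds.2 (fun x _ U hU ↦ ?_)⟩
  have hc : ‖(2 : ℤ_[2])‖ < 1 := by
    have : ((2:ℕ) : ℤ_[2]) = (2 : ℤ_[2]) := by norm_cast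
    rw [← this, PadicInt.norm_p]; norm_num
  have A : Tendsto (fun n ↦ x + (2:ℤ_[2])^n) atTop (𝓝 (x + 0)) :=
    tendsto_const_nhds.add (tendsto_pow_atTop_nhds_zero_of_norm_lt_one hc)
  rw [add_zero] at A
  have B : ∀ᶠ n in atTop, x + (2:ℤ_[2])^n ∈ U := tendsto_def.1 A U hU
  rcases B.exists with ⟨n, hn⟩
  refine ⟨x + 2^n, by simpa using hn, ?_⟩
  simp only [ne_eq, _root_.add_eq_left]
  exact pow_ne_zero _ two_ne_zero


section
variable (Z : AddSubgroup ℤ_[2])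

/-- The saturation of `Z` in `ℤ_[2]`. -/
noncomputable def satG : AddSubgroup ℤ_[2] where
  carrier := {x | ∃ n : ℕ, 0 < n ∧ n • x ∈ Z}
  zero_mem' := ⟨1, one_pos, by simpa using Z.zero_mem⟩
  add_mem' := by
    rintro x y ⟨n, hn, hx⟩ ⟨m, hm, hy⟩
    refine ⟨n * m, Nat.mul_pos hn hm, ?_⟩
    rw [smul_add]
    apply Z.add_mem
    · rw [mul_comm, mul_smul]; exact AddSubgroup.nsmul_mem Z hx m
    · rw [mul_smul]; exact AddSubgroup.nsmul_mem Z hy n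
  neg_mem' := by
    rintro x ⟨n, hn, hx⟩
    exact ⟨n, hn, by simpa using Z.neg_mem hx⟩

theorem mem_satG (x : ℤ_[2]) : x ∈ satG Z ↔ ∃ n : ℕ, 0 < n ∧ n • x ∈ Z := Iff.rfl

theorem satG_div2 (y : ℤ_[2]) (h : 2 * y ∈ satG Z) : y ∈ satG Z := by
  obtain ⟨n, hn, hx⟩ := h
  refine ⟨2 * n, by positivity, ?_⟩
  rw [mul_smul]
  have : n • (2 * y) = 2 • (n • y) := by
    rw [two_mul, smul_add, two_smul]
  rwa [this] at hx

-- torsion-freeness of the ambient and of satG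
theorem padic_nsmul_cancel (n : ℕ) (hn : 0 < n) (x y : ℤ_[2]) (h : n • x = n • y) : x = y := by
  have : (n : ℤ_[2]) * x = (n : ℤ_[2]) * y := by
    simpa [nsmul_eq_mul] using h
  exact mul_left_cancel₀ (Nat.cast_ne_zero.2 hn.ne') this

theorem satG_torsionFree (n : ℕ) (a : satG Z) (hn : 0 < n) (h : n • a = 0) : a = 0 := by
  have hv : n • (a : ℤ_[2]) = n • (0 : ℤ_[2]) := by
    have := congrArg (Subtype.val) h
    simpa using this
  exact Subtype.ext (padic_nsmul_cancel n hn _ _ hv)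

end

section
variable (Z : AddSubgroup ℤ_[2])

noncomputable def satG_inj : satG Z → Z × ℕ := fun a =>
  ⟨⟨(a.2.choose) • (a : ℤ_[2]), a.2.choose_spec.2⟩, a.2.choose⟩

theorem satG_inj_injective : Function.Injective (satG_inj Z) := by
  rintro a b hab
  have h1 : a.2.choose = b.2.choose := congrArg Prod.snd hab
  have h2 : (a.2.choose) • (a : ℤ_[2]) = (b.2.choose) • (b : ℤ_[2]) :=
    congrArg (fun q => (q.1 : ℤ_[2])) hab
  rw [h1] at h2
  exact Subtype.ext (padic_nsmul_cancel b.2.choose b.2.choose_spec.1 _ _ h2)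

theorem satG_card_le (h : #Z ≤ aleph 1) : #(satG Z) ≤ aleph 1 := by
  have := Cardinal.mk_le_of_injective (satG_inj_injective Z)
  rw [Cardinal.mk_prod] at this
  refine this.trans ?_
  simp only [Cardinal.lift_id, Cardinal.mk_nat]
  calc #Z * ℵ₀ ≤ aleph 1 * aleph 1 :=
        mul_le_mul' h ((aleph0_le_aleph 1))
    _ = aleph 1 := Cardinal.mul_eq_self (aleph0_le_aleph 1)

end

section
variable (Z : AddSubgroup ℤ_[2]) (B C : AddSubgroup (satG Z))

/-- Key splitting lemma: if `u ∈ B`, `v ∈ C` and `u + v` is divisible by 2 in `ℤ_[2]`,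
then `u` and `v` are each divisible by 2 inside `B` resp. `C`. -/
theorem key (hinf : B ⊓ C = ⊥) (hsup : B ⊔ C = ⊤) (u v : satG Z)
    (hu : u ∈ B) (hv : v ∈ C) (y : ℤ_[2]) (h : ((u : ℤ_[2]) + v) = 2 * y) :
    (∃ u' ∈ B, (u : ℤ_[2]) = 2 * u') ∧ (∃ v' ∈ C, (v : ℤ_[2]) = 2 * v') := by
  have hyA : y ∈ satG Z := by
    apply satG_div2
    rw [← h]
    exact (u + v).2
  set a : satG Z := ⟨y, hyA⟩ with ha
  have haT : a ∈ B ⊔ C := by rw [hsup]; trivial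
  obtain ⟨b₂, hb₂, c₂, hc₂, hbc⟩ := (AddSubgroup.mem_sup).1 haT
  have hval : (b₂ : ℤ_[2]) + c₂ = y := by
    have := congrArg Subtype.val hbc
    simpa using this
  set e : satG Z := u - (b₂ + b₂) with he
  set f : satG Z := v - (c₂ + c₂) with hf
  have hef : e + f = 0 := by
    apply Subtype.ext
    push_cast [he, hf]
    have : (u : ℤ_[2]) + v = 2 * ((b₂ : ℤ_[2]) + c₂) := by rw [hval, ← h]
    linear_combination this
  have heB : e ∈ B := B.sub_mem hu (B.add_mem hb₂ hb₂)
  have heC : e ∈ C := by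
    have : e = -f := by rw [eq_neg_iff_add_eq_zero]; exact hef
    rw [this]
    exact C.neg_mem (C.sub_mem hv (C.add_mem hc₂ hc₂))
  have he0 : e = 0 := by
    have : e ∈ B ⊓ C := ⟨heB, heC⟩
    rwa [hinf, AddSubgroup.mem_bot] at this
  have hf0 : f = 0 := by rwa [he0, zero_add] at hef
  constructor
  · refine ⟨b₂, hb₂, ?_⟩
    have : u = b₂ + b₂ := by rwa [sub_eq_zero] at he0
    rw [this]; push_cast; ring
  · refine ⟨c₂, hc₂, ?_⟩
    have : v = c₂ + c₂ := by rwa [sub_eq_zero] at hf0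
    rw [this]; push_cast; ring

end

section
variable (Z : AddSubgroup ℤ_[2]) (B C : AddSubgroup (satG Z))

theorem L1 (hinf : B ⊓ C = ⊥) (hsup : B ⊔ C = ⊤)
    (h2 : ∀ b ∈ B, (2 : ℤ_[2]) ∣ (b : ℤ_[2])) : B = ⊥ := by
  have hdiv : ∀ b ∈ B, ∃ b' ∈ B, (b : ℤ_[2]) = 2 * b' := by
    intro b hb
    obtain ⟨y, hy⟩ := h2 b hb
    exact (key Z B C hinf hsup b 0 hb C.zero_mem y (by simpa using hy)).1
  -- every element of B is divisible by 2^n for all n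
  have hpow : ∀ n : ℕ, ∀ b ∈ B, ∃ b' ∈ B, (b : ℤ_[2]) = 2 ^ n * b' := by
    intro n
    induction n with
    | zero => intro b hb; exact ⟨b, hb, by simp⟩
    | succ n ih =>
      intro b hb
      obtain ⟨b', hb', hval⟩ := ih b hb
      obtain ⟨b'', hb'', hval'⟩ := hdiv b' hb'
      exact ⟨b'', hb'', by rw [hval, hval', pow_succ]; ring⟩
  ext b
  simp only [AddSubgroup.mem_bot]
  constructor
  · intro hb
    have hnorm : ∀ n : ℕ, ‖(b : ℤ_[2])‖ ≤ (2 : ℝ)⁻¹ ^ n := by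
      intro n
      obtain ⟨b', _, hval⟩ := hpow n b hb
      calc ‖(b : ℤ_[2])‖ = ‖(2 : ℤ_[2]) ^ n * (b' : ℤ_[2])‖ := by rw [hval]
        _ ≤ ‖(2 : ℤ_[2]) ^ n‖ * ‖(b' : ℤ_[2])‖ := norm_mul_le _ _
        _ ≤ ‖(2 : ℤ_[2]) ^ n‖ * 1 :=
            mul_le_mul_of_nonneg_left (PadicInt.norm_le_one _) (norm_nonneg _)
        _ = (2 : ℝ)⁻¹ ^ n := by
            rw [mul_one]
            have : ((2:ℕ) : ℤ_[2]) = (2 : ℤ_[2]) := by norm_cast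
            rw [← this, PadicInt.norm_p_pow]
            push_cast
            rw [zpow_neg, ← inv_zpow]
            norm_num
    have : (b : ℤ_[2]) = 0 := by
      by_contra hne
      have hpos : 0 < ‖(b : ℤ_[2])‖ := norm_pos_iff.2 hne
      obtain ⟨n, hn⟩ := exists_pow_lt_of_lt_one hpos (by norm_num : (2:ℝ)⁻¹ < 1)
      exact absurd (hnorm n) (not_le.2 hn)
    exact Subtype.ext this
  · rintro rfl; exact B.zero_mem

end

section
variable (Z : AddSubgroup ℤ_[2])

theorem main_indec (B C : AddSubgroup (satG Z)) (hinf : B ⊓ C = ⊥) (hsup : B ⊔ C = ⊤) :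
    B = ⊥ ∨ C = ⊥ := by
  have hcast : ((2:ℕ) : ℤ_[2]) = (2 : ℤ_[2]) := by norm_cast
  by_contra hcon
  push_neg at hcon
  obtain ⟨hB, hC⟩ := hcon
  -- B has an element not divisible by 2 (else L1 gives B = ⊥)
  have hb : ∃ b ∈ B, ¬ (2 : ℤ_[2]) ∣ (b : ℤ_[2]) := by
    by_contra h
    push_neg at h
    exact hB (L1 Z B C hinf hsup h)
  obtain ⟨b, hbB, hbnd⟩ := hb
  -- b is a unit in ℤ_[2]
  have hbu : IsUnit (b : ℤ_[2]) := by
    rw [PadicInt.isUnit_iff]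
    refine le_antisymm (PadicInt.norm_le_one _) ?_
    by_contra hlt
    push_neg at hlt
    exact hbnd (hcast ▸ (PadicInt.norm_lt_one_iff_dvd _).1 hlt)
  obtain ⟨u, hu⟩ := hbu
  -- every element of C is divisible by 2
  have hCdvd : ∀ c ∈ C, (2 : ℤ_[2]) ∣ (c : ℤ_[2]) := by
    intro c hc
    set z : ℤ_[2] := (↑u⁻¹ : ℤ_[2]) * c with hz
    obtain ⟨k, -, hk⟩ := PadicInt.exists_mem_range (p := 2) (x := z)
    rw [PadicInt.maximalIdeal_eq_span_p, Ideal.mem_span_singleton, hcast] at hk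
    obtain ⟨t, ht⟩ := hk
    -- c - k • b = 2 * (b * t)
    have hbz : (b : ℤ_[2]) * z = (c : ℤ_[2]) := by
      rw [hz, ← hu, ← mul_assoc]
      simp
    have heq : (((-(k • b) : satG Z)) : ℤ_[2]) + (c : ℤ_[2]) = 2 * ((b : ℤ_[2]) * t) := by
      have h1 : (c : ℤ_[2]) - (k : ℤ_[2]) * (b : ℤ_[2]) = (b : ℤ_[2]) * (z - (k : ℤ_[2])) := by
        rw [mul_sub, hbz]; ring
      rw [ht] at h1
      push_cast
      rw [nsmul_eq_mul]
      linear_combination h1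
    obtain ⟨-, c', hc', hval⟩ := key Z B C hinf hsup (-(k • b)) c
      (B.neg_mem (AddSubgroup.nsmul_mem B hbB k)) hc ((b : ℤ_[2]) * t) heq
    exact ⟨c', hval⟩
  exact hC (L1 Z C B (by rwa [inf_comm]) (by rwa [sup_comm]) hCdvd)

end

open Cardinal in
/-- There exists an indecomposable torsion-free abelian group of cardinality `ℵ₁`. -/
theorem exists_indecomposable_torsionFree_of_card_aleph_one :
    ∃ (A : Type) (instA : AddCommGroup A),
      letI := instA
      (∀ (n : ℕ) (a : A), 0 < n → n • a = 0 → a = 0) ∧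
      Cardinal.mk A = Cardinal.aleph 1 ∧
      ∀ B C : AddSubgroup A, B ⊓ C = ⊥ → B ⊔ C = ⊤ → B = ⊥ ∨ C = ⊥ := by
  have hle : aleph 1 ≤ #ℤ_[2] := (aleph_one_le_continuum).trans continuum_le_padic
  obtain ⟨S, hS⟩ := (Cardinal.le_mk_iff_exists_set).1 hle
  set Z : AddSubgroup ℤ_[2] := (Submodule.span ℤ S).toAddSubgroup with hZ
  have hZcard : #Z ≤ aleph 1 := by
    have hinf : Infinite S := by
      rw [Cardinal.infinite_iff, hS]; exact aleph0_le_aleph 1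
    have h1 : #(Submodule.span ℤ S) ≤ #(S →₀ ℤ) := by
      have h : (Submodule.span ℤ S : Set ℤ_[2]) =
          Set.range (Finsupp.linearCombination ℤ ((↑) : S → ℤ_[2])) := by
        rw [← LinearMap.coe_range, Finsupp.range_linearCombination, Subtype.range_coe]
      calc #(Submodule.span ℤ S)
          = #(Set.range (Finsupp.linearCombination ℤ ((↑) : S → ℤ_[2]))) := by rw [← h]; rfl
        _ ≤ #(S →₀ ℤ) := mk_range_le
    have h2 : #(S →₀ ℤ) = max #S ℵ₀ := by
      simp [mk_finsupp_lift_of_infinite S ℤ]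
    rw [h2, hS] at h1
    exact h1.trans (by simp [aleph0_le_aleph])
  refine ⟨satG Z, inferInstance, fun n a hn h => satG_torsionFree Z n a hn h, ?_, main_indec Z⟩
  -- cardinality
  refine le_antisymm (satG_card_le Z hZcard) ?_
  have hsub : S ⊆ (satG Z : Set ℤ_[2]) := by
    intro x hx
    exact ⟨1, one_pos, by simpa [hZ] using Submodule.subset_span hx⟩
  calc aleph 1 = #S := hS.symm
    _ ≤ #(satG Z : Set ℤ_[2]) := Cardinal.mk_le_mk_of_subset hsub
    _ = #(satG Z) := rfl
end

section
/- The Pontryagin dual of a torsion-free discrete abelian group is connected: if A is a torsion-free abelian group (with the discrete topology), then the Pontryagin dual group A* = Hom(A, 𝕋) of all group homomorphisms from A to the circle group 𝕋, equipped with the topology of pointwise convergence (equivalently, the compact-open topology), is a connected topological space. -/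
open Function Set

section Aux

/-- Every element of the circle has an `n`-th root for `n ≠ 0`. -/
lemma circle_exists_zpow_eq (n : ℤ) (hn : n ≠ 0) (z : Circle) :
    ∃ w : Circle, w ^ n = z := by
  refine ⟨Circle.exp (Complex.arg (z : ℂ) / n), ?_⟩
  have h1 : Circle.exp (n • (Complex.arg (z : ℂ) / n)) =
      Circle.exp (Complex.arg (z : ℂ) / n) ^ n := by
    have := map_zsmul Circle.expHom n (Complex.arg (z : ℂ) / n)
    simpa [Circle.expHom, ← ofMul_zpow] using this
  rw [← h1]
  have h2 : (n : ℝ) ≠ 0 := Int.cast_ne_zero.mpr hn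
  rw [zsmul_eq_mul, mul_comm, div_mul_cancel₀ _ h2, Circle.exp_arg]

noncomputable instance : DivisibleBy (Additive Circle) ℤ where
  div a n := if h : n = 0 then 0 else
    Additive.ofMul ((circle_exists_zpow_eq n h a.toMul).choose)
  div_zero a := by simp
  div_cancel {n} a hn := by
    simp only [dif_neg hn, ← ofMul_zpow, (circle_exists_zpow_eq n hn a.toMul).choose_spec]
    rfl

universe u

variable {A : Type u} [CommGroup A]

/-- Divisibility of the character group of a torsion-free abelian group: every character has
an `n`-th root. -/
lemma exists_pow_root
    (htf : ∀ (n : ℕ) (a : A), 0 < n → a ^ n = 1 → a = 1)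
    (χ : A →* Circle) (n : ℕ) (hn : 0 < n) :
    ∃ ψ : A →* Circle, ∀ a, ψ a ^ n = χ a := by
  set f : Additive A →ₗ[ℤ] Additive A := (n : ℤ) • LinearMap.id with hfdef
  have hfapp : ∀ x : Additive A, f x = (n : ℤ) • x := fun x => rfl
  have hfinj : Function.Injective f := by
    intro x y hxy
    rw [hfapp, hfapp] at hxy
    have h : ((n : ℤ) • (x - y) : Additive A) = 0 := by
      rw [smul_sub, hxy, sub_self]
    have h2 : (x - y).toMul ^ n = 1 := by
      have := congrArg Additive.toMul h
      rw [toMul_zsmul] at this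
      simpa [zpow_natCast] using this
    have h3 := htf n (x - y).toMul hn h2
    have h4 : x - y = 0 := by
      have := congrArg Additive.ofMul h3
      simpa using this
    exact sub_eq_zero.mp h4
  let g0 : Additive A →+ Additive Circle := MonoidHom.toAdditive χ
  let g : Additive A →ₗ[ℤ] ULift.{u} (Additive Circle) :=
    ((AddEquiv.ulift.symm.toAddMonoidHom).comp g0).toIntLinearMap
  haveI : Module.Injective ℤ (ULift.{u} (Additive Circle)) :=
    (Module.Baer.of_divisible _).injective
  obtain ⟨h, hh⟩ := Module.Injective.out f hfinj g
  let ψ' : Additive A →+ Additive Circle :=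
    AddEquiv.ulift.toAddMonoidHom.comp h.toAddMonoidHom
  refine ⟨MonoidHom.toAdditive.symm ψ', fun a => ?_⟩
  have key : (n : ℤ) • ψ' (Additive.ofMul a) = Additive.ofMul (χ a) := by
    have h1 : ψ' ((n : ℤ) • Additive.ofMul a) = (n : ℤ) • ψ' (Additive.ofMul a) :=
      map_zsmul ψ' _ _
    have h2 : h ((n : ℤ) • Additive.ofMul a) = g (Additive.ofMul a) := by
      have := hh (Additive.ofMul a)
      rwa [hfapp] at this
    rw [← h1]
    show AddEquiv.ulift (h ((n : ℤ) • Additive.ofMul a)) = Additive.ofMul (χ a)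
    rw [h2]
    rfl
  have : Additive.ofMul ((MonoidHom.toAdditive.symm ψ') a ^ n) = Additive.ofMul (χ a) := by
    rw [ofMul_pow]
    rw [← natCast_zsmul]
    exact key
  exact Additive.ofMul.injective this

variable (A) in
/-- The subgroup of the product `∀ _ : A, Circle` consisting of multiplicative functions. -/
noncomputable def homSG : Subgroup (∀ _ : A, Circle) where
  carrier := {f | ∀ x y, f (x * y) = f x * f y}
  one_mem' := by intro x y; simp
  mul_mem' := by
    intro f g hf hg x y
    simp only [Pi.mul_apply, hf x y, hg x y]
    exact mul_mul_mul_comm _ _ _ _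
  inv_mem' := by
    intro f hf x y
    simp only [Pi.inv_apply, hf x y, mul_inv]

lemma homSG_map_one {f : ∀ _ : A, Circle} (hf : f ∈ homSG A) : f 1 = 1 := by
  have := hf 1 1
  rw [mul_one] at this
  exact (left_eq_mul.mp this)

end Aux

/-- The Pontryagin dual of a torsion-free discrete abelian group is connected. -/
theorem pontryaginDual_connected_of_torsionFree
    (A : Type*) [CommGroup A] [TopologicalSpace A] [DiscreteTopology A]
    (htf : ∀ (n : ℕ) (a : A), 0 < n → a ^ n = 1 → a = 1) :
    ConnectedSpace (PontryaginDual A) := by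
  classical
  set H : Subgroup (∀ _ : A, Circle) := homSG A with hHdef
  -- `H` is closed, hence compact
  have hHclosed : IsClosed (H : Set (∀ _ : A, Circle)) := by
    have : (H : Set (∀ _ : A, Circle)) =
        ⋂ (x : A) (y : A), {f | f (x * y) = f x * f y} := by
      ext f
      simp only [Set.mem_iInter, Set.mem_setOf_eq]
      rfl
    rw [this]
    exact isClosed_iInter fun x => isClosed_iInter fun y =>
      isClosed_eq (continuous_apply (x * y)) ((continuous_apply x).mul (continuous_apply y))
  haveI : CompactSpace ↥H := isCompact_iff_compactSpace.mp hHclosed.isCompact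
  -- every element of `H` has an `n`-th root
  have hdiv : ∀ (x : ↥H) (n : ℕ), 0 < n → ∃ y : ↥H, y ^ n = x := by
    intro x n hn
    let χ : A →* Circle :=
      { toFun := (x : ∀ _ : A, Circle),
        map_one' := homSG_map_one x.2,
        map_mul' := x.2 }
    obtain ⟨ψ, hψ⟩ := exists_pow_root htf χ n hn
    refine ⟨⟨⇑ψ, fun p q => map_mul ψ p q⟩, Subtype.ext ?_⟩
    rw [SubmonoidClass.coe_pow]
    funext a
    exact hψ a
  -- `H` is preconnected
  haveI : PreconnectedSpace ↥H := by
    refine preconnectedSpace_of_forall_constant fun f hf x y => ?_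
    have hW : IsClopen (f ⁻¹' {f 1}) := (isClopen_discrete _).preimage hf
    obtain ⟨K, hK⟩ :=
      IsTopologicalGroup.exist_openNormalSubgroup_sub_clopen_nhds_of_one hW rfl
    haveI : Finite (↥H ⧸ K.toSubgroup) :=
      Subgroup.quotient_finite_of_isOpen K.toSubgroup K.toOpenSubgroup.isOpen
    haveI : K.toSubgroup.FiniteIndex := Subgroup.finiteIndex_of_finite_quotient
    have hn : 0 < K.toSubgroup.index :=
      Nat.pos_of_ne_zero Subgroup.FiniteIndex.index_ne_zero
    have hKtop : ∀ z : ↥H, z ∈ K.toSubgroup := by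
      intro z
      obtain ⟨w, hw⟩ := hdiv z K.toSubgroup.index hn
      rw [← hw]
      exact Subgroup.pow_index_mem K.toSubgroup w
    have hx : f x = f 1 := hK (hKtop x)
    have hy : f y = f 1 := hK (hKtop y)
    rw [hx, hy]
  haveI : ConnectedSpace ↥H := { toNonempty := ⟨1⟩ }
  -- the natural map `H → PontryaginDual A` is a continuous surjection
  let Ψ : ↥H → PontryaginDual A := fun x =>
    ⟨{ toFun := (x : ∀ _ : A, Circle),
       map_one' := homSG_map_one x.2,
       map_mul' := x.2 }, continuous_of_discreteTopology⟩
  have hΨsurj : Surjective Ψ := by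
    intro χ
    exact ⟨⟨⇑χ, fun p q => map_mul χ p q⟩, ContinuousMonoidHom.ext fun a => rfl⟩
  have hΨcont : Continuous Ψ := by
    apply ContinuousMonoidHom.continuous_of_continuous_uncurry
    have : (Function.uncurry fun (x : ↥H) (y : A) => Ψ x y) =
        fun p : ↥H × A => (p.1 : ∀ _ : A, Circle) p.2 := rfl
    show Continuous (fun p : ↥H × A => (p.1 : ∀ _ : A, Circle) p.2)
    rw [continuous_iff_continuousAt]
    rintro ⟨x, a⟩
    have h1 : ContinuousAt (fun p : ↥H × A => (p.1 : ∀ _ : A, Circle) a) (x, a) :=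
      (((continuous_apply a).comp continuous_subtype_val).comp continuous_fst).continuousAt
    refine h1.congr ?_
    have hopen : IsOpen {p : ↥H × A | p.2 = a} :=
      (isOpen_discrete ({a} : Set A)).preimage continuous_snd
    filter_upwards [hopen.mem_nhds rfl] with p hp
    rw [show p.2 = a from hp]
  exact hΨsurj.connectedSpace hΨcont
end
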